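/- arXiv:1110.1194 — 4 statements merged into one kernel-verified Lean document; each statement's English description precedes it below -/
import Mathlib

section
/- The encoding of an integer w as a self-inverting permutation via Encode_W-to-SIP followed by the decoding Decode_SIP-to-W returns w; i.e., the encoding map from n-bit integers to self-inverting permutations of length 2n+1 is injective. -/
/-- Value (as Bool, true = 1) of the bit sequence B* = flip(B') at position i ∈ {1,...,2n+1},
where B' = 0^n ‖ (n-bit binary representation of w, MSB first) ‖ 1. -/
def bstar (n w i : ℕ) : Bool :=
  decide (i ≤ n) || (decide (i ≠ 2 * n + 1) && !(w.testBit (2 * n - i)))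

/-- Positions (from 1 to 2n+1) of the 0s of B*, in increasing order. -/
def zerosPos (n w : ℕ) : List ℕ :=
  ((List.range (2 * n + 1)).map (· + 1)).filter fun i => !bstar n w i

/-- Positions (from 1 to 2n+1) of the 1s of B*, in increasing order. -/
def onesPos (n w : ℕ) : List ℕ :=
  ((List.range (2 * n + 1)).map (· + 1)).filter fun i => bstar n w i

/-- The bitonic sequence σ = X ‖ reverse(Y) of Encode_W-to-SIP. -/
def sigmaList (n w : ℕ) : List ℕ :=
  zerosPos n w ++ (onesPos n w).reverse

/-- The self-inverting permutation π* of Encode_W-to-SIP, as the function pairing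
σ_i with σ_{2n+2-i} (1-indexed), i.e., index i with index 2n-i (0-indexed),
fixing the middle element. -/
def encodeSIP (n w : ℕ) : ℕ → ℕ := fun x =>
  (sigmaList n w).getD (2 * n - (sigmaList n w).idxOf x) 0

/-! ### Auxiliary development -/

/-- Zeros of B* strictly between position n and 2n+1. -/
def Zl (n w : ℕ) : List ℕ :=
  (List.range' (n+1) n).filter (fun i => w.testBit (2*n - i))

/-- Ones of B* strictly between position n and 2n+1. -/
def Ol (n w : ℕ) : List ℕ :=
  (List.range' (n+1) n).filter (fun i => !w.testBit (2*n - i))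

lemma base_eq (n : ℕ) :
    ((List.range (2*n+1)).map (· + 1)) = List.range' 1 (2*n+1) := by
  rw [List.range'_eq_map_range]
  apply List.map_congr_left
  intro x _
  omega

lemma range'_split (s k t : ℕ) :
    List.range' s (k + 1 + t) = List.range' s k ++ (s+k) :: List.range' (s+k+1) t := by
  have h := List.range'_append_1 (s := s) (m := k) (n := t+1)
  rw [List.range'_succ] at h
  rw [show k + 1 + t = k + (t + 1) by omega, ← h]

lemma range_split (n : ℕ) :
    List.range' 1 (2*n+1) = (List.range' 1 n ++ List.range' (n+1) n) ++ [2*n+1] := by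
  rw [List.range'_1_concat, show 2*n = n + n by omega, ← List.range'_append_1 (s := 1) (m := n) (n := n),
    show 1 + n = n + 1 by omega, show 1 + (n + n) = 2*(n+n)/2+1 by omega]
  congr 2
  omega

lemma bstar_low (n w i : ℕ) (h : i ≤ n) : bstar n w i = true := by
  simp [bstar, h]

lemma bstar_mid (n w i : ℕ) (h1 : n < i) (h2 : i ≤ 2*n) : bstar n w i = !w.testBit (2*n-i) := by
  have hn : ¬ i ≤ n := by omega
  have hne : i ≠ 2*n+1 := by omega
  simp [bstar, hn, hne]

lemma bstar_last (n w : ℕ) : bstar n w (2*n+1) = false := by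
  have hn : ¬ (2*n+1 ≤ n) := by omega
  simp [bstar, hn]

lemma zerosPos_eq (n w : ℕ) : zerosPos n w = Zl n w ++ [2*n+1] := by
  rw [zerosPos, base_eq, range_split, List.filter_append, List.filter_append]
  rw [List.filter_eq_nil_iff.mpr, List.nil_append]
  · congr 1
    · rw [Zl]
      apply List.filter_congr
      intro i hi
      simp only [List.mem_range'_1] at hi
      rw [bstar_mid n w i (by omega) (by omega)]
      simp
    · simp [bstar_last]
  · intro i hi
    simp only [List.mem_range'_1] at hi
    simp [bstar_low n w i (by omega)]

lemma onesPos_eq (n w : ℕ) : onesPos n w = List.range' 1 n ++ Ol n w := by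
  rw [onesPos, base_eq, range_split, List.filter_append, List.filter_append]
  have h3 : List.filter (fun i => bstar n w i) [2*n+1] = [] := by
    simp [bstar_last]
  rw [h3, List.append_nil]
  congr 1
  · apply List.filter_eq_self.mpr
    intro i hi
    simp only [List.mem_range'_1] at hi
    exact bstar_low n w i (by omega)
  · rw [Ol]
    apply List.filter_congr
    intro i hi
    simp only [List.mem_range'_1] at hi
    rw [bstar_mid n w i (by omega) (by omega)]

lemma len_zl_add_ol (n w : ℕ) : (Zl n w).length + (Ol n w).length = n := by
  have h := List.length_eq_length_filter_add
    (l := List.range' (n+1) n) (fun i => w.testBit (2*n - i))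
  simp only [List.length_range'] at h
  rw [Zl, Ol]
  simp only [← h]

lemma len_zl_le (n w : ℕ) : (Zl n w).length ≤ n := by
  have := len_zl_add_ol n w
  omega

lemma len_ones (n w : ℕ) : (onesPos n w).length = 2*n - (Zl n w).length := by
  rw [onesPos_eq]
  have := len_zl_add_ol n w
  simp only [List.length_append, List.length_range']
  omega

lemma getD_rev (l : List ℕ) (t : ℕ) (h : t < l.length) :
    l.reverse.getD t 0 = l.getD (l.length - 1 - t) 0 := by
  rw [List.getD_eq_getElem _ _ (by simpa using h), List.getD_eq_getElem _ _ (by omega),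
    List.getElem_reverse]

lemma pairwise_getD_ge : ∀ (l : List ℕ), l.Pairwise (· < ·) → ∀ a, (∀ x ∈ l, a ≤ x) →
    ∀ t, t < l.length → a + t ≤ l.getD t 0
  | [], _, a, _, t, ht => by simp at ht
  | x :: l, hp, a, ha, 0, ht => by simpa using ha x List.mem_cons_self
  | x :: l, hp, a, ha, t+1, ht => by
    rw [List.getD_cons_succ]
    have h1 : x + 1 + t ≤ l.getD t 0 :=
      pairwise_getD_ge l (List.pairwise_cons.mp hp).2 (x+1)
        (fun y hy => (List.pairwise_cons.mp hp).1 y hy) t (by simpa using ht)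
    have := ha x List.mem_cons_self
    omega

lemma onesPos_getD_ge (n w t : ℕ) (ht : t < (onesPos n w).length) :
    t + 1 ≤ (onesPos n w).getD t 0 := by
  have hp : (onesPos n w).Pairwise (· < ·) := by
    rw [onesPos, base_eq]
    exact (List.pairwise_lt_range' (s := 1) (n := 2*n+1)).sublist List.filter_sublist
  have ha : ∀ x ∈ onesPos n w, 1 ≤ x := by
    intro x hx
    rw [onesPos, base_eq] at hx
    have := List.mem_range'_1.mp (List.mem_of_mem_filter hx)
    omega
  have := pairwise_getD_ge _ hp 1 ha t ht
  omega

lemma onesPos_getD_low (n w t : ℕ) (ht : t < n) : (onesPos n w).getD t 0 = t + 1 := by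
  rw [onesPos_eq, List.getD_append _ _ _ _ (by simpa using ht),
    List.getD_eq_getElem _ _ (by simpa using ht), List.getElem_range'_1]
  omega

lemma sigma_getD (n w t : ℕ) (hs : (Zl n w).length + 1 ≤ t) (ht : t ≤ 2*n) :
    (sigmaList n w).getD t 0 = (onesPos n w).getD (2*n - t) 0 := by
  have hzlen : (zerosPos n w).length = (Zl n w).length + 1 := by
    rw [zerosPos_eq]; simp
  have hones := len_ones n w
  have hsn := len_zl_le n w
  rw [sigmaList, List.getD_append_right _ _ _ _ (by omega),
    getD_rev _ _ (by omega), hones, hzlen]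
  congr 1
  omega

lemma idx_last (n w : ℕ) :
    (sigmaList n w).idxOf (2*n+1) = (Zl n w).length := by
  have hnm : (2*n+1) ∉ Zl n w := by
    intro hmem
    rw [Zl] at hmem
    have := List.mem_range'_1.mp (List.mem_of_mem_filter hmem)
    omega
  rw [sigmaList, zerosPos_eq,
    List.idxOf_append_of_mem (by simp),
    List.idxOf_append_of_notMem hnm, List.idxOf_cons_self]
  omega

lemma encode_last (n w : ℕ) :
    encodeSIP n w (2*n+1) =
      if (Zl n w).length < n then (Zl n w).length + 1 else 2*n+1 := by
  have hsn := len_zl_le n w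
  simp only [encodeSIP, idx_last]
  by_cases h : (Zl n w).length < n
  · rw [if_pos h, sigma_getD n w _ (by omega) (by omega),
      show 2*n - (2*n - (Zl n w).length) = (Zl n w).length by omega,
      onesPos_getD_low n w _ h]
  · rw [if_neg h]
    have hs : (Zl n w).length = n := by omega
    have hs : (Zl n w).length = n := by omega
    rw [hs, show 2*n - n = n by omega, sigmaList,
      List.getD_append _ _ _ _ (by rw [zerosPos_eq]; simp [hs]),
      zerosPos_eq, List.getD_append_right _ _ _ _ (by simp [hs]), hs]
    simp

lemma key (n w j : ℕ) (hj : j < n) :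
    w.testBit j =
      decide (encodeSIP n w (2*n - j) < encodeSIP n w (2*n + 1)) := by
  have hsn := len_zl_le n w
  have hzo := len_zl_add_ol n w
  set s := (Zl n w).length with hs
  -- the position corresponding to bit j
  set a := n - 1 - j with ha
  have hia : 2*n - j = n + 1 + a := by omega
  have hbit : 2*n - (n+1+a) = j := by omega
  have hrange : List.range' (n+1) n
      = List.range' (n+1) a ++ (n+1+a) :: List.range' (n+1+a+1) (n-1-a) := by
    rw [show n = a + 1 + (n-1-a) by omega, range'_split]
    rw [show a + 1 + (n - 1 - a) - 1 - a = n - 1 - a by omega]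
  rw [encode_last, hia]
  by_cases hb : w.testBit j
  · -- position n+1+a is a zero of B*; it sits in Zl
    have hZl : Zl n w = (List.range' (n+1) a).filter (fun i => w.testBit (2*n - i))
        ++ (n+1+a) :: (List.range' (n+1+a+1) (n-1-a)).filter (fun i => w.testBit (2*n - i)) := by
      rw [Zl, hrange, List.filter_append, List.filter_cons_of_pos (by rw [hbit]; exact hb)]
    set m := ((List.range' (n+1) a).filter (fun i => w.testBit (2*n - i))).length with hm
    have hmem : (n+1+a) ∈ Zl n w := by
      rw [hZl]; exact List.mem_append_right _ List.mem_cons_self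
    have hms : m + 1 ≤ s := by
      rw [hs, hZl]; simp only [List.length_append, List.length_cons]; omega
    have hidx : (sigmaList n w).idxOf (n+1+a) = m := by
      have hnm : (n+1+a) ∉ (List.range' (n+1) a).filter (fun i => w.testBit (2*n - i)) := by
        intro hmem'
        have := List.mem_range'_1.mp (List.mem_of_mem_filter hmem')
        omega
      rw [sigmaList, zerosPos_eq,
        List.idxOf_append_of_mem (List.mem_append_left _ hmem),
        List.idxOf_append_of_mem hmem, hZl,
        List.idxOf_append_of_notMem hnm, List.idxOf_cons_self]
      omega
    have hval : encodeSIP n w (n+1+a) = m + 1 := by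
      simp only [encodeSIP, hidx]
      rw [sigma_getD n w _ (by omega) (by omega),
        show 2*n - (2*n - m) = m by omega, onesPos_getD_low n w m (by omega)]
    rw [hval, hb]
    by_cases hcase : s < n
    · rw [if_pos hcase]; simp; omega
    · rw [if_neg hcase]; simp; omega
  · -- position n+1+a is a one of B*; it sits in Ol
    simp only [Bool.not_eq_true] at hb
    have hOl : Ol n w = (List.range' (n+1) a).filter (fun i => !w.testBit (2*n - i))
        ++ (n+1+a) :: (List.range' (n+1+a+1) (n-1-a)).filter (fun i => !w.testBit (2*n - i)) := by
      rw [Ol, hrange, List.filter_append, List.filter_cons_of_pos (by rw [hbit, hb]; rfl)]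
    set G1 := (List.range' (n+1) a).filter (fun i => !w.testBit (2*n - i)) with hG1
    set G2 := (List.range' (n+1+a+1) (n-1-a)).filter (fun i => !w.testBit (2*n - i)) with hG2
    set u := G2.length with hu
    have hOlen : (Ol n w).length = G1.length + 1 + u := by
      rw [hOl]; simp; omega
    have hus : u + s + 1 ≤ n := by omega
    have hsln : s < n := by omega
    have hnotz : (n+1+a) ∉ Zl n w ++ [2*n+1] := by
      intro hmem
      rcases List.mem_append.mp hmem with hmem | hmem
      · rw [Zl] at hmem
        have h2 := (List.mem_filter.mp hmem).2
        rw [hbit] at h2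
        simp [hb] at h2
      · simp at hmem; omega
    have hnotrev : (n+1+a) ∉ G2.reverse := by
      intro hmem
      rw [List.mem_reverse] at hmem
      have := List.mem_range'_1.mp (List.mem_of_mem_filter hmem)
      omega
    have hidx : (sigmaList n w).idxOf (n+1+a) = s + 1 + u := by
      rw [sigmaList, zerosPos_eq, List.idxOf_append_of_notMem hnotz]
      have hrev : (onesPos n w).reverse
          = G2.reverse ++ (n+1+a) :: (G1.reverse ++ (List.range' 1 n).reverse) := by
        rw [onesPos_eq, hOl, List.reverse_append, List.reverse_append, List.reverse_cons,
          List.append_assoc]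
        simp
      rw [hrev, List.idxOf_append_of_notMem hnotrev, List.idxOf_cons_self]
      simp only [List.length_append, List.length_cons, List.length_nil, List.length_reverse]
      omega
    have hval : (onesPos n w).getD (s+1+u) 0 ≥ s + 2 := by
      have hlt : s+1+u < (onesPos n w).length := by rw [len_ones]; omega
      have := onesPos_getD_ge n w (s+1+u) hlt
      omega
    have hval2 : encodeSIP n w (n+1+a) = (onesPos n w).getD (s+1+u) 0 := by
      simp only [encodeSIP, hidx]
      rw [sigma_getD n w _ (by omega) (by omega)]
      congr 1
      omega
    rw [if_pos hsln, hval2, hb]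
    symm
    rw [decide_eq_false_iff_not]
    omega

/-- Encoding an n-bit integer w by Encode_W-to-SIP and decoding by Decode_SIP-to-W
returns w; i.e., the encoding map from n-bit integers to self-inverting
permutations of length 2n+1 is injective. -/
theorem stmt_4 (n w₁ w₂ : ℕ) (hw₁ : w₁ < 2 ^ n) (hw₂ : w₂ < 2 ^ n)
    (h : encodeSIP n w₁ = encodeSIP n w₂) : w₁ = w₂ := by
  apply Nat.eq_of_testBit_eq
  intro j
  by_cases hj : j < n
  · rw [key n w₁ j hj, key n w₂ j hj, h]
  · have hn : n ≤ j := le_of_not_gt hj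
    have h1 : w₁ < 2^j := lt_of_lt_of_le hw₁ (Nat.pow_le_pow_right (by norm_num) hn)
    have h2 : w₂ < 2^j := lt_of_lt_of_le hw₂ (Nat.pow_le_pow_right (by norm_num) hn)
    rw [Nat.testBit_lt_two_pow h1, Nat.testBit_lt_two_pow h2]
end

section
/- The reducible permutation flow-graph F[π*] on nodes u_0, u_1, ..., u_{n+1}, containing all 'list' edges (u_{i+1}, u_i) for 0 ≤ i ≤ n, has the unique Hamiltonian path (u_{n+1}, u_n, ..., u_1, u_0). -/
lemma stmt_9_aux (n : ℕ) (d : ℕ → ℕ)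
    (hd : ∀ i, 1 ≤ i → i ≤ n → i < d i ∧ d i ≤ n + 1) :
    ∀ (r : List ℕ) (j : ℕ),
      (j :: r).Chain' (flip (fun a b => (a ≤ n + 1 ∧ a = b + 1) ∨ (1 ≤ a ∧ a ≤ n ∧ b = d a))) →
      r.Nodup →
      (∀ v, v ∈ r ↔ j + 1 ≤ v ∧ v ≤ n + 1) →
      r = List.range' (j + 1) (n + 1 - j) := by
  intro r
  induction r with
  | nil =>
    intro j _ _ hmem
    have hj : n + 1 ≤ j := by
      by_contra hj
      have : (n+1) ∈ ([] : List ℕ) := (hmem (n + 1)).mpr ⟨by omega, le_refl _⟩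
      simp at this
    have : n + 1 - j = 0 := by omega
    simp [this]
  | cons a r' ih =>
    intro j hchain hnodup hmem
    obtain ⟨hEja, hchain'⟩ := List.isChain_cons_cons.mp hchain
    have haR : j + 1 ≤ a ∧ a ≤ n + 1 := (hmem a).mp List.mem_cons_self
    have ha : a = j + 1 := by
      rcases hEja with ⟨_, h⟩ | ⟨h1, h2, h3⟩
      · omega
      · have := (hd a h1 h2).1
        omega
    have hnd := List.nodup_cons.mp hnodup
    have hmem' : ∀ v, v ∈ r' ↔ (j + 1) + 1 ≤ v ∧ v ≤ n + 1 := by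
      intro v
      constructor
      · intro hv
        have hb := (hmem v).mp (List.mem_cons_of_mem a hv)
        have : v ≠ a := fun h => hnd.1 (h ▸ hv)
        omega
      · intro hv
        have : v ∈ a :: r' := (hmem v).mpr ⟨by omega, hv.2⟩
        rcases List.mem_cons.mp this with h | h
        · omega
        · exact h
    have hjn : j ≤ n := by omega
    have := ih (j + 1) (ha ▸ hchain') hnd.2 hmem'
    rw [ha, this]
    have : n + 1 - j = (n + 1 - (j + 1)) + 1 := by omega
    rw [this, List.range'_succ]

lemma stmt_9_zero (n : ℕ) (d : ℕ → ℕ) :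
    ∀ (r : List ℕ) (b : ℕ),
      (b :: r).Chain' (flip (fun a b => (a ≤ n + 1 ∧ a = b + 1) ∨ (1 ≤ a ∧ a ≤ n ∧ b = d a))) →
      0 ∈ r → False := by
  intro r
  induction r with
  | nil => intro b _ h; simp at h
  | cons a r' ih =>
    intro b hchain hmem
    obtain ⟨hE, hchain'⟩ := List.isChain_cons_cons.mp hchain
    rcases List.mem_cons.mp hmem with h | h
    · subst h
      rcases hE with ⟨_, h⟩ | ⟨h, _⟩ <;> omega
    · exact ih a hchain' h

/-- The reducible permutation flow-graph F[π*] on nodes u_0,...,u_{n+1}, with list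
edges (u_{i+1},u_i) and, for each body node u_i (1 ≤ i ≤ n), a max-didomination
edge (u_i, u_m) with i < m ≤ n+1, has the unique Hamiltonian path
(u_{n+1}, u_n, ..., u_1, u_0). -/
theorem stmt_9 (n : ℕ) (d : ℕ → ℕ)
    (hd : ∀ i, 1 ≤ i → i ≤ n → i < d i ∧ d i ≤ n + 1) :
    let E : ℕ → ℕ → Prop := fun a b =>
      (a ≤ n + 1 ∧ a = b + 1) ∨ (1 ≤ a ∧ a ≤ n ∧ b = d a)
    let hp : List ℕ := (List.range (n + 2)).reverse
    (hp.Nodup ∧ (∀ v, v ∈ hp ↔ v ≤ n + 1) ∧ hp.Chain' E) ∧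
    ∀ l : List ℕ, l.Nodup → (∀ v, v ∈ l ↔ v ≤ n + 1) → l.Chain' E → l = hp := by
  intro E hp
  constructor
  · refine ⟨by simp [hp, List.nodup_range], fun v => by simp [hp]; omega, ?_⟩
    rw [show hp = (List.range (n + 2)).reverse from rfl]
    change List.IsChain _ _
    rw [List.isChain_reverse]
    rw [List.isChain_range_succ]
    intro m hm
    exact Or.inl ⟨by omega, rfl⟩
  · intro l hnodup hmem hchain
    have hrev : l.reverse.Chain' (flip E) := by
      change List.IsChain _ _; rw [List.isChain_reverse]; exact hchain
    have h0 : 0 ∈ l.reverse := by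
      rw [List.mem_reverse]; exact (hmem 0).mpr (by omega)
    obtain ⟨b, r₀, hr⟩ : ∃ b r₀, l.reverse = b :: r₀ := by
      cases hl : l.reverse with
      | nil => rw [hl] at h0; simp at h0
      | cons b r₀ => exact ⟨b, r₀, rfl⟩
    rw [hr] at hrev h0
    have hb : b = 0 := by
      by_contra hb
      rcases List.mem_cons.mp h0 with h | h
      · exact hb h.symm
      · exact stmt_9_zero n d r₀ b hrev h
    subst hb
    have hndr : (0 :: r₀).Nodup := hr ▸ (List.nodup_reverse.mpr hnodup)
    have hmemr : ∀ v, v ∈ r₀ ↔ 0 + 1 ≤ v ∧ v ≤ n + 1 := by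
      intro v
      constructor
      · intro hv
        have : v ∈ l := by
          rw [← List.mem_reverse, hr]; exact List.mem_cons_of_mem _ hv
        have hvle := (hmem v).mp this
        have : v ≠ 0 := fun h => (List.nodup_cons.mp hndr).1 (h ▸ hv)
        omega
      · intro hv
        have : v ∈ l.reverse := by rw [List.mem_reverse]; exact (hmem v).mpr hv.2
        rw [hr] at this
        rcases List.mem_cons.mp this with h | h
        · omega
        · exact h
    have hr₀ := stmt_9_aux n d hd r₀ 0 hrev (List.nodup_cons.mp hndr).2 hmemr
    have : l.reverse = List.range (n + 2) := by
      rw [hr, hr₀, List.range_eq_range']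
      have : n + 2 = (n + 1 - 0) + 1 := by omega
      rw [this, List.range'_succ]
    calc l = l.reverse.reverse := (List.reverse_reverse l).symm
    _ = hp := by rw [this]
end

section
/- In a permutation π of {1,...,n}, for every element i with i ≠ max position value appearing before it, define p(i) as the rightmost element to the left of i in π that is greater than i (with sentinel n+1 prepended). Then p(i) equals the maximum-labeled element that directly dominates i. -/
/-- In a permutation (listed as l, a rearrangement of 1,...,n, with sentinel n+1
prepended to form L), for every element i, the value v at the rightmost position
to the left of i that is greater than i equals the maximum-labeled element that
directly dominates i. -/
theorem stmt_10 (n : ℕ) (l : List ℕ) (hl : l.Perm ((List.range n).map (· + 1))) :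
    let L : List ℕ := (n + 1) :: l
    let dom : ℕ → ℕ → Prop := fun a b => b < a ∧ L.idxOf a < L.idxOf b
    let didom : ℕ → ℕ → Prop := fun a b => dom a b ∧ ¬ ∃ k ∈ L, dom a k ∧ dom k b
    ∀ i ∈ l, ∀ v ∈ L,
      ((∃ jv, jv < L.idxOf i ∧ L.getD jv 0 = v ∧ i < v ∧
          ∀ j, jv < j → j < L.idxOf i → ¬ i < L.getD j 0) ↔
        (didom v i ∧ ∀ k ∈ L, didom k i → k ≤ v)) := by
  intro L dom didom i hi v hv
  -- basic facts
  have hle : ∀ x ∈ l, x ≤ n := by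
    intro x hx
    have := hl.mem_iff.1 hx
    simp only [List.mem_map, List.mem_range] at this
    obtain ⟨y, hy, rfl⟩ := this
    omega
  have hnotmem : (n + 1) ∉ l := fun h => by have := hle _ h; omega
  have hnd : L.Nodup := by
    refine List.nodup_cons.2 ⟨hnotmem, ?_⟩
    exact hl.nodup_iff.2 ((List.nodup_range (n := n)).map (fun a b h => by simpa using h))
  have hiL : i ∈ L := List.mem_cons_of_mem _ hi
  have hidxi : L.idxOf i < L.length := List.idxOf_lt_length_iff.2 hiL
  have hidxv : L.idxOf v < L.length := List.idxOf_lt_length_iff.2 hv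
  have hgetD : ∀ j (h : j < L.length), L.getD j 0 = L[j] := fun j h =>
    List.getD_eq_getElem L 0 h
  have hidxgetElem : ∀ j (h : j < L.length), L.idxOf L[j] = j := fun j h =>
    List.Nodup.idxOf_getElem hnd j h
  constructor
  · rintro ⟨jv, hjv, hvval, hiv, hright⟩
    have hjvlen : jv < L.length := hjv.trans hidxi
    have hvget : L[jv] = v := by rw [← hgetD jv hjvlen, hvval]
    have hidxv' : L.idxOf v = jv := by rw [← hvget, hidxgetElem]
    have hdomvi : dom v i := ⟨hiv, by rw [hidxv']; exact hjv⟩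
    refine ⟨⟨hdomvi, ?_⟩, ?_⟩
    · rintro ⟨k, hk, ⟨hkv, hik1⟩, ⟨hik, hik2⟩⟩
      have hk1 : jv < L.idxOf k := by rw [hidxv'] at hik1; exact hik1
      have := hright _ hk1 hik2
      rw [hgetD _ (hik2.trans hidxi), List.getElem_idxOf (List.idxOf_lt_length_iff.2 hk)] at this
      omega
    · rintro k hk ⟨⟨hik, hki⟩, hnd2⟩
      by_contra hkv
      push_neg at hkv
      -- v < k, so idx k ≤ jv; idx k ≠ jv since k ≠ v
      have hkne : k ≠ v := by omega
      have hidxk : L.idxOf k < L.length := List.idxOf_lt_length_iff.2 hk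
      have h1 : L.idxOf k ≤ jv := by
        by_contra h
        push_neg at h
        have := hright _ h hki
        rw [hgetD _ (hki.trans hidxi), List.getElem_idxOf hidxk] at this
        omega
      have h2 : L.idxOf k ≠ jv := by
        intro h
        rw [← hidxv'] at h
        exact hkne ((List.idxOf_inj hk).1 h)
      exact hnd2 ⟨v, hv, ⟨by omega, by rw [hidxv']; omega⟩, hdomvi⟩
  · rintro ⟨⟨⟨hiv, hvi⟩, hnd2⟩, hmax⟩
    refine ⟨L.idxOf v, hvi, ?_, hiv, ?_⟩
    · rw [hgetD _ hidxv, List.getElem_idxOf hidxv]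
    · intro j h1 h2 hgt
      -- there is some bad j; take the greatest one
      have hjlen : ∀ {j'}, j' < L.idxOf i → j' < L.length := fun h => h.trans hidxi
      set P : ℕ → Prop := fun j' => L.idxOf v < j' ∧ j' < L.idxOf i ∧ i < L.getD j' 0 with hP
      have hPj : P j := ⟨h1, h2, hgt⟩
      have hPdec : DecidablePred P := fun _ => by unfold P; infer_instance
      obtain ⟨m, hPm, hmmax⟩ : ∃ m, P m ∧ ∀ m', m < m' → m' < L.idxOf i → ¬ P m' := by
        have hbdd : ∀ m, P m → m < L.idxOf i := fun m hm => hm.2.1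
        classical
        obtain ⟨m, hPm, hmax'⟩ := Finset.exists_max_image
          ((Finset.range (L.idxOf i)).filter P) id
          ⟨j, Finset.mem_filter.2 ⟨Finset.mem_range.2 h2, hPj⟩⟩
        refine ⟨m, (Finset.mem_filter.1 hPm).2, fun m' hmm' hm'lt hPm' => ?_⟩
        have : m' ∈ (Finset.range (L.idxOf i)).filter P :=
          Finset.mem_filter.2 ⟨Finset.mem_range.2 hm'lt, hPm'⟩
        have := hmax' _ this
        simp only [id] at this
        omega
      obtain ⟨hm1, hm2, hm3⟩ := hPm
      set k := L[m]'(hjlen hm2) with hk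
      rw [hgetD _ (hjlen hm2)] at hm3
      have hkmem : k ∈ L := List.getElem_mem _
      have hidxk : L.idxOf k = m := hidxgetElem _ _
      have hdomki : dom k i := ⟨hm3, by rw [hidxk]; exact hm2⟩
      -- k directly dominates i
      have hdidomki : didom k i := by
        refine ⟨hdomki, ?_⟩
        rintro ⟨k', hk', ⟨hk'k, hkk'⟩, ⟨hik', hk'i⟩⟩
        rw [hidxk] at hkk'
        exact hmmax _ hkk' hk'i ⟨hm1.trans hkk', hk'i,
          by rw [hgetD _ (hjlen hk'i), List.getElem_idxOf (List.idxOf_lt_length_iff.2 hk')]; exact hik'⟩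
      have hkv : k ≤ v := hmax k hkmem hdidomki
      have hkvne : k ≠ v := by
        intro h
        rw [h] at hidxk
        omega
      exact hnd2 ⟨k, hkmem, ⟨by omega, by rw [hidxk]; exact hm1⟩, hdomki⟩
end

section
/- The graph F[π*] is a reducible flow-graph: every strongly connected subgraph of F[π*] with more than one vertex has at most one entry point; equivalently, every back edge (u_i, u_m) with m > i w.r.t. the list order creates a cycle with a unique entry. -/
/-- Intermediate value: a chain starting at `a ≥ M` and ending at `b ≤ M` passes
through `M`, since edges either decrement by one or increase. -/
lemma key_ivt (n : ℕ) (d : ℕ → ℕ)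
    (hd : ∀ i, 1 ≤ i → i ≤ n → i < d i ∧ d i ≤ n + 1) (M : ℕ) :
    ∀ p : List ℕ,
      p.Chain' (fun a b => (a ≤ n + 1 ∧ a = b + 1) ∨ (1 ≤ a ∧ a ≤ n ∧ b = d a)) →
      ∀ a b, p.head? = some a → p.getLast? = some b → M ≤ a → b ≤ M → M ∈ p := by
  intro p
  induction p with
  | nil => intro _ a b h; simp at h
  | cons x q ih =>
    intro hc a b hh hl hMa hbM
    simp only [List.head?_cons, Option.some.injEq] at hh
    subst hh
    cases q with
    | nil =>
      simp only [List.getLast?_singleton, Option.some.injEq] at hl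
      subst hl
      have : x = M := le_antisymm hbM hMa
      simp [this]
    | cons y r =>
      rcases List.isChain_cons_cons.mp hc with ⟨hE, hc'⟩
      rcases eq_or_lt_of_le hMa with h | h
      · exact h ▸ List.mem_cons_self
      · have hMy : M ≤ y := by
          rcases hE with ⟨_, hxy⟩ | ⟨h1, h2, hy⟩
          · omega
          · have := (hd x h1 h2).1; omega
        have hl' : (y :: r).getLast? = some b := by
          rw [← hl]; exact List.getLast?_cons_cons.symm
        exact List.mem_cons_of_mem _ (ih hc' y b rfl hl' hMy hbM)

/-- F[π*] is reducible: every strongly connected subgraph (on a vertex set S with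
at least two vertices) has at most one entry, where an entry of S is a node x ∈ S
admitting a path from the initial node s = u_{n+1} whose only vertex in S is x. -/
theorem stmt_19 (n : ℕ) (d : ℕ → ℕ)
    (hd : ∀ i, 1 ≤ i → i ≤ n → i < d i ∧ d i ≤ n + 1) :
    let E : ℕ → ℕ → Prop := fun a b =>
      (a ≤ n + 1 ∧ a = b + 1) ∨ (1 ≤ a ∧ a ≤ n ∧ b = d a)
    ∀ S : Finset ℕ, (∀ x ∈ S, x ≤ n + 1) → 2 ≤ S.card →
      (∀ x ∈ S, ∀ y ∈ S,
        Relation.ReflTransGen (fun a b => a ∈ S ∧ b ∈ S ∧ E a b) x y) →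
      ∀ x₁ ∈ S, ∀ x₂ ∈ S,
        (∃ p : List ℕ, p.Chain' E ∧ p.head? = some (n + 1) ∧
          p.getLast? = some x₁ ∧ ∀ y ∈ p, y ∈ S → y = x₁) →
        (∃ p : List ℕ, p.Chain' E ∧ p.head? = some (n + 1) ∧
          p.getLast? = some x₂ ∧ ∀ y ∈ p, y ∈ S → y = x₂) →
        x₁ = x₂ := by
  intro E S hS hcard _ x₁ hx₁ x₂ hx₂ ⟨p₁, hc₁, hh₁, hl₁, ho₁⟩ ⟨p₂, hc₂, hh₂, hl₂, ho₂⟩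
  have hne : S.Nonempty := Finset.card_pos.mp (by omega)
  set M := S.max' hne with hM
  have hMS : M ∈ S := S.max'_mem hne
  have entry : ∀ (x : ℕ), x ∈ S →
      ∀ p : List ℕ, p.Chain' E → p.head? = some (n + 1) →
      p.getLast? = some x → (∀ y ∈ p, y ∈ S → y = x) → x = M := by
    intro x hx p hc hh hl ho
    have hxM : x ≤ M := S.le_max' x hx
    have hMn : M ≤ n + 1 := hS M hMS
    have hmem : M ∈ p := key_ivt n d hd M p hc (n + 1) x hh hl hMn hxM
    exact (ho M hmem hMS).symm
  rw [entry x₁ hx₁ p₁ hc₁ hh₁ hl₁ ho₁, entry x₂ hx₂ p₂ hc₂ hh₂ hl₂ ho₂]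
end
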